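/- arXiv:2011.13659 — 3 statements merged into one kernel-verified Lean document; each statement's English description precedes it below -/
import Mathlib

section
/- Let $K$ be a field, let $n \ge 2$, and let $R = K[X]/(X^n)$. Consider the $K$-linear representation of the group of units $R^\times$ on $R$ in which a unit acts by multiplication. Then this representation is not semisimple; concretely, the ideal generated by the image of $X$ is an $R^\times$-invariant $K$-subspace of $R$ that admits no $R^\times$-invariant complementary $K$-subspace. -/
open Polynomial

section Aux

variable {K : Type*} [Field K] {n : ℕ}

local notation "R" => AdjoinRoot (X ^ n : Polynomial K)

lemma aux_root_pow (K : Type*) [Field K] (n : ℕ) :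
    (AdjoinRoot.root (X ^ n : Polynomial K)) ^ n = 0 := by
  rw [← AdjoinRoot.mk_X, ← map_pow, AdjoinRoot.mk_self]

lemma aux_mem_nilpotent {a : AdjoinRoot (X ^ n : Polynomial K)}
    (ha : a ∈ Ideal.span {AdjoinRoot.root (X ^ n : Polynomial K)}) : IsNilpotent a := by
  rw [Ideal.mem_span_singleton] at ha
  obtain ⟨b, rfl⟩ := ha
  exact ⟨n, by rw [mul_pow, aux_root_pow, zero_mul]⟩

/-- every element is a unit or in the span of the root -/
lemma aux_unit_or_mem (a : AdjoinRoot (X ^ n : Polynomial K)) :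
    IsUnit a ∨ a ∈ Ideal.span {AdjoinRoot.root (X ^ n : Polynomial K)} := by
  obtain ⟨p, rfl⟩ := AdjoinRoot.mk_surjective a
  have hdec : AdjoinRoot.mk (X ^ n : Polynomial K) p
      = AdjoinRoot.mk _ (p.divX) * AdjoinRoot.root _
        + algebraMap K _ (p.coeff 0) := by
    conv_lhs => rw [← Polynomial.divX_mul_X_add p]
    rw [map_add, map_mul]
    rfl
  by_cases hc : p.coeff 0 = 0
  · right
    rw [hdec, hc, map_zero, add_zero]
    exact Ideal.mul_mem_left _ _ (Ideal.mem_span_singleton_self _)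
  · left
    rw [hdec]
    have hnil : IsNilpotent (AdjoinRoot.mk (X ^ n : Polynomial K) p.divX
        * AdjoinRoot.root _) :=
      aux_mem_nilpotent (Ideal.mul_mem_left _ _ (Ideal.mem_span_singleton_self _))
    exact hnil.isUnit_add_right_of_commute ((isUnit_iff_ne_zero.2 hc).map _)
      (Commute.all _ _)

lemma aux_root_ne_zero (K : Type*) [Field K] {n : ℕ} (hn : 2 ≤ n) :
    (AdjoinRoot.root (X ^ n : Polynomial K)) ≠ 0 := by
  intro h
  have := AdjoinRoot.mk_eq_zero.mp h
  have hdeg := Polynomial.natDegree_le_of_dvd this X_ne_zero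
  rw [natDegree_pow, natDegree_X] at hdeg
  omega

end Aux

/-- Let `K` be a field, `n ≥ 2`, and `R = K[X]/(Xⁿ)`.  The `K`-linear representation of the
group of units `Rˣ` on `R` by multiplication is not semisimple: the ideal generated by the
image of `X` is an `Rˣ`-invariant `K`-subspace of `R` admitting no `Rˣ`-invariant complementary
`K`-subspace. -/
theorem stmt6 (K : Type*) [Field K] (n : ℕ) (hn : 2 ≤ n) :
    (∀ u : (AdjoinRoot (X ^ n : Polynomial K))ˣ,
      ∀ v ∈ (Ideal.span {AdjoinRoot.root (X ^ n : Polynomial K)}).restrictScalars K,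
        (u : AdjoinRoot (X ^ n : Polynomial K)) * v ∈
          (Ideal.span {AdjoinRoot.root (X ^ n : Polynomial K)}).restrictScalars K) ∧
    ∀ Q : Submodule K (AdjoinRoot (X ^ n : Polynomial K)),
      (∀ u : (AdjoinRoot (X ^ n : Polynomial K))ˣ,
        ∀ v ∈ Q, (u : AdjoinRoot (X ^ n : Polynomial K)) * v ∈ Q) →
      ¬ IsCompl ((Ideal.span {AdjoinRoot.root (X ^ n : Polynomial K)}).restrictScalars K) Q := by
  set r := AdjoinRoot.root (X ^ n : Polynomial K) with hr
  set I := Ideal.span {r} with hI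
  refine ⟨fun u v hv => Ideal.mul_mem_left _ _ hv, fun Q hQ hcompl => ?_⟩
  -- Q is closed under multiplication by arbitrary ring elements
  have hQmul : ∀ a : AdjoinRoot (X ^ n : Polynomial K), ∀ v ∈ Q, a * v ∈ Q := by
    intro a v hv
    rcases aux_unit_or_mem a with h | h
    · exact hQ h.unit v hv
    · have h1 : IsUnit (1 + a) := (aux_mem_nilpotent h).isUnit_one_add
      have := hQ h1.unit v hv
      rw [IsUnit.unit_spec, add_mul, one_mul] at this
      have := Q.sub_mem this hv
      simpa using this
  -- get a unit q in Q from codisjointness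
  have htop : (1 : AdjoinRoot (X ^ n : Polynomial K)) ∈
      I.restrictScalars K ⊔ Q := by
    rw [hcompl.sup_eq_top]; trivial
  obtain ⟨i, hi, q, hq, hiq⟩ := Submodule.mem_sup.mp htop
  have hqu : IsUnit q := by
    have : q = 1 - i := by linear_combination hiq
    rw [this]
    exact (aux_mem_nilpotent hi).isUnit_one_sub
  -- q * r lies in both I and Q, hence is zero
  have h1 : q * r ∈ I := Ideal.mul_mem_left _ _ (Ideal.mem_span_singleton_self _)
  have h2 : q * r ∈ Q := by rw [mul_comm]; exact hQmul r q hq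
  have h0 : q * r = 0 := by
    have := hcompl.disjoint.le_bot ⟨h1, h2⟩
    simpa using this
  exact aux_root_ne_zero K hn ((hqu.mul_right_eq_zero).mp h0)
end

section
/- Let $k'/k$ be a finite purely inseparable field extension with $k' \ne k$, and let $K$ be a perfect field extension of $k$. Consider the $K$-linear representation of the group $k'^\times$ on $K \otimes_k k'$ in which $u \in k'^\times$ acts by multiplication by $1 \otimes u$. Then this representation is not semisimple: the nilradical of $K \otimes_k k'$ is a nonzero proper $k'^\times$-invariant $K$-subspace admitting no $k'^\times$-invariant complementary $K$-subspace. -/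
open TensorProduct

/-- Let `k'/k` be a finite purely inseparable field extension with `k' ≠ k`, and let `K` be a
perfect field extension of `k`.  The `K`-linear representation of `k'ˣ` on `K ⊗[k] k'`, in
which `u : k'ˣ` acts by multiplication by `1 ⊗ u`, is not semisimple: the nilradical of
`K ⊗[k] k'` is a nonzero proper `k'ˣ`-invariant `K`-subspace admitting no `k'ˣ`-invariant
complementary `K`-subspace. -/
theorem stmt8 (k k' : Type*) [Field k] [Field k'] [Algebra k k']
    [FiniteDimensional k k'] [IsPurelyInseparable k k']
    (hne : ¬ Function.Surjective (algebraMap k k'))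
    (K : Type*) [Field K] [Algebra k K] [PerfectField K] :
    (nilradical (K ⊗[k] k')).restrictScalars K ≠ ⊥ ∧
    (nilradical (K ⊗[k] k')).restrictScalars K ≠ ⊤ ∧
    (∀ u : k'ˣ, ∀ v ∈ (nilradical (K ⊗[k] k')).restrictScalars K,
      (1 ⊗ₜ[k] (u : k') : K ⊗[k] k') * v ∈ (nilradical (K ⊗[k] k')).restrictScalars K) ∧
    ∀ Q : Submodule K (K ⊗[k] k'),
      (∀ u : k'ˣ, ∀ v ∈ Q, (1 ⊗ₜ[k] (u : k') : K ⊗[k] k') * v ∈ Q) →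
      ¬ IsCompl ((nilradical (K ⊗[k] k')).restrictScalars K) Q := by
  classical
  obtain ⟨p, hpc⟩ := ExpChar.exists k
  cases hpc with
  | zero =>
      exact absurd (IsPurelyInseparable.surjective_algebraMap_of_isSeparable k k') hne
  | prime hp =>
  haveI := Fact.mk hp
  haveI : ExpChar k p := ExpChar.prime hp
  haveI : CharP K p := charP_of_injective_algebraMap (algebraMap k K).injective p
  haveI : ExpChar K p := ExpChar.prime hp
  haveI : Nontrivial (K ⊗[k] k') := inferInstance
  haveI : CharP (K ⊗[k] k') p :=
    charP_of_injective_algebraMap (algebraMap K (K ⊗[k] k')).injective p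
  haveI : ExpChar (K ⊗[k] k') p := ExpChar.prime hp
  unfold Function.Surjective at hne
  push_neg at hne
  obtain ⟨x, hx⟩ := hne
  obtain ⟨n, c, hc⟩ := IsPurelyInseparable.pow_mem k p x
  haveI : PerfectRing K p := PerfectField.toPerfectRing p
  set y : K := (iterateFrobeniusEquiv K p n).symm (algebraMap k K c) with hy
  have hyp : y ^ p ^ n = algebraMap k K c := by
    have h := (iterateFrobeniusEquiv K p n).apply_symm_apply (algebraMap k K c)
    rwa [iterateFrobeniusEquiv_def] at h
  set z : K ⊗[k] k' := y ⊗ₜ[k] 1 - 1 ⊗ₜ[k] x with hz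
  have hznil : z ∈ nilradical (K ⊗[k] k') := by
    refine mem_nilradical.2 ⟨p ^ n, ?_⟩
    rw [hz, sub_pow_expChar_pow, Algebra.TensorProduct.tmul_pow, Algebra.TensorProduct.tmul_pow,
      one_pow, one_pow, hyp, ← hc, Algebra.algebraMap_eq_smul_one,
      Algebra.algebraMap_eq_smul_one (R := k) (A := k'), TensorProduct.smul_tmul, sub_self]
  -- z ≠ 0
  have hx1 : x ∉ Submodule.span k {(1 : k')} := by
    rw [Submodule.mem_span_singleton]
    rintro ⟨d, rfl⟩
    exact hx d (by rw [Algebra.algebraMap_eq_smul_one])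
  obtain ⟨f, hfx, hf1⟩ := Submodule.exists_dual_map_eq_bot_of_notMem hx1 inferInstance
  have hf1' : f 1 = 0 := by
    have h : f 1 ∈ Submodule.map f (Submodule.span k {(1 : k')}) :=
      Submodule.mem_map_of_mem (Submodule.mem_span_singleton_self 1)
    rw [hf1] at h
    exact (Submodule.mem_bot k).1 h
  have hzne : z ≠ 0 := by
    intro h0
    have h := congrArg (fun w => (TensorProduct.rid k K) ((LinearMap.lTensor K f) w)) h0
    simp only [hz, map_sub, LinearMap.lTensor_tmul, TensorProduct.rid_tmul, hf1', map_zero,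
      zero_smul, zero_sub, neg_eq_zero] at h
    have hfx0 : algebraMap k K (f x) = 0 := by
      rw [Algebra.algebraMap_eq_smul_one]; exact h
    exact hfx ((algebraMap k K).injective.eq_iff' (map_zero _) |>.1 hfx0)
  have hNne : (nilradical (K ⊗[k] k')).restrictScalars K ≠ ⊥ := by
    intro h
    have hm : z ∈ (nilradical (K ⊗[k] k')).restrictScalars K := hznil
    rw [h, Submodule.mem_bot] at hm
    exact hzne hm
  have hNtop : (nilradical (K ⊗[k] k')).restrictScalars K ≠ ⊤ := by
    intro h
    have h1 : (1 : K ⊗[k] k') ∈ (nilradical (K ⊗[k] k')).restrictScalars K := by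
      rw [h]; trivial
    obtain ⟨m, hm⟩ := mem_nilradical.1 h1
    rw [one_pow] at hm
    exact one_ne_zero hm
  refine ⟨hNne, hNtop, fun u v hv => Ideal.mul_mem_left _ _ hv, ?_⟩
  intro Q hQ hcompl
  have key : ∀ a : K ⊗[k] k', ∀ v ∈ Q, a * v ∈ Q := by
    intro a v hv
    induction a using TensorProduct.induction_on with
    | zero => simp only [zero_mul]; exact Q.zero_mem
    | tmul b x' =>
        by_cases hx' : x' = 0
        · subst hx'
          rw [TensorProduct.tmul_zero, zero_mul]
          exact Q.zero_mem
        · have hb : (b ⊗ₜ[k] x' : K ⊗[k] k') = b • (1 ⊗ₜ[k] x') := by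
            rw [TensorProduct.smul_tmul', smul_eq_mul, mul_one]
          rw [hb, smul_mul_assoc]
          exact Q.smul_mem b (hQ (Units.mk0 x' hx') v hv)
    | add a b ha hb => rw [add_mul]; exact Q.add_mem ha hb
  have h1 : (1 : K ⊗[k] k') ∈ (nilradical (K ⊗[k] k')).restrictScalars K ⊔ Q := by
    rw [hcompl.sup_eq_top]; trivial
  obtain ⟨e, he, g, hgQ, heg⟩ := Submodule.mem_sup.1 h1
  have hegQ : e * g ∈ Q := key e g hgQ
  have hegN : e * g ∈ (nilradical (K ⊗[k] k')).restrictScalars K :=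
    Ideal.mul_mem_right _ _ he
  have heg0 : e * g = 0 := by
    have hm : e * g ∈ ((nilradical (K ⊗[k] k')).restrictScalars K ⊓ Q) :=
      Submodule.mem_inf.2 ⟨hegN, hegQ⟩
    rw [hcompl.inf_eq_bot, Submodule.mem_bot] at hm
    exact hm
  have hee : IsIdempotentElem e := by
    have h := heg
    have h2 : e * (e + g) = e * 1 := by rw [heg]
    rw [mul_add, heg0, add_zero, mul_one] at h2
    exact h2
  have he0 : e = 0 := hee.eq_zero_of_isNilpotent (mem_nilradical.1 he)
  have hg1 : g = 1 := by rwa [he0, zero_add] at heg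
  have hzQ : z ∈ Q := by
    have h := key z g hgQ
    rwa [hg1, mul_one] at h
  have hm : z ∈ ((nilradical (K ⊗[k] k')).restrictScalars K ⊓ Q) :=
    Submodule.mem_inf.2 ⟨hznil, hzQ⟩
  rw [hcompl.inf_eq_bot, Submodule.mem_bot] at hm
  exact hzne hm
end

section
/- Let $k$ be a field of characteristic $p > 0$, let $a \in k$ be an element with no $p$-th root in $k$, let $q = p^s$ with $s \ge 1$, and let $k' = k[X]/(X^q - a)$ (a purely inseparable field extension of $k$ of degree $q$). Let $K$ be an algebraic closure of $k$. Then: (i) the $k$-linear representation of the group $k'^\times$ on $k'$ by multiplication is irreducible (the only invariant $k$-subspaces are $0$ and $k'$); while (ii) the $K$-linear representation of $k'^\times$ on $K \otimes_k k'$, where $u$ acts by multiplication by $1 \otimes u$, is not semisimple. -/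
set_option maxHeartbeats 1000000

open Polynomial TensorProduct

theorem my_irred {k : Type*} [Field k] {p : ℕ} (hp : p.Prime) [CharP k p]
    {a : k} (ha : ∀ b : k, b ^ p ≠ a) (s : ℕ) :
    Irreducible (X ^ (p ^ s) - C a : k[X]) := by
  haveI : ExpChar k p := .prime hp
  set K := AlgebraicClosure k
  set f : k[X] := X ^ (p ^ s) - C a with hf
  have hq0 : p ^ s ≠ 0 := pow_ne_zero _ hp.ne_zero
  have hfm : f.Monic := monic_X_pow_sub_C a hq0
  have hf0 : f ≠ 0 := hfm.ne_zero
  obtain ⟨b, hb⟩ := IsAlgClosed.exists_pow_nat_eq (algebraMap k K a) (n := p ^ s)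
    (Nat.pos_of_ne_zero hq0)
  have hroot : (aeval b) f = 0 := by
    simp [hf, hb]
  have hbi : IsIntegral k b := ⟨f, hfm, by simpa [aeval_def] using hroot⟩
  have hsep : (minpoly k b).natSepDegree = 1 :=
    (minpoly.natSepDegree_eq_one_iff_pow_mem p).2 ⟨s, ⟨a, hb.symm⟩⟩
  obtain ⟨n, y, hmin⟩ := (minpoly.natSepDegree_eq_one_iff_eq_X_pow_sub_C p).1 hsep
  have hdvd : minpoly k b ∣ f := minpoly.dvd k b hroot
  have hdeg : (minpoly k b).natDegree = p ^ n := by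
    rw [hmin, natDegree_X_pow_sub_C]
  have hle : n ≤ s := by
    have := Polynomial.natDegree_le_of_dvd hdvd hf0
    rw [hdeg, hf, natDegree_X_pow_sub_C] at this
    exact (Nat.pow_le_pow_iff_right hp.one_lt).1 this
  rcases lt_or_eq_of_le hle with hlt | rfl
  · exfalso
    have hby : b ^ p ^ n = algebraMap k K y := by
      have := minpoly.aeval k b
      rw [hmin] at this
      simpa [sub_eq_zero] using this
    have hya : y ^ p ^ (s - n) = a := by
      apply (algebraMap k K).injective
      rw [map_pow, ← hby, ← pow_mul, ← pow_add, Nat.add_sub_cancel' hlt.le, hb]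
    have : s - n = (s - n - 1) + 1 := by omega
    rw [this, pow_succ, pow_mul] at hya
    exact ha _ hya
  · -- minpoly has same degree as f, so they're associated
    obtain ⟨c, hc⟩ := hdvd
    have hc0 : c ≠ 0 := by
      rintro rfl; rw [mul_zero] at hc; exact hf0 hc
    have hcd : c.natDegree = 0 := by
      have h1 : f.natDegree = (minpoly k b).natDegree + c.natDegree := by
        rw [hc, natDegree_mul (minpoly.ne_zero hbi) hc0]
      rw [hdeg, hf, natDegree_X_pow_sub_C] at h1
      omega
    obtain ⟨u, rfl⟩ := Polynomial.natDegree_eq_zero.1 hcd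
    have hu : IsUnit (C u) := isUnit_C.2 (Ne.isUnit (by rintro rfl; simp at hc0))
    have : Associated (minpoly k b) f := ⟨hu.unit, hc.symm⟩
    exact this.irreducible (minpoly.irreducible hbi)

/-- Let `k` be a field of characteristic `p > 0`, let `a ∈ k` have no `p`-th root in `k`, let
`q = p ^ s` with `s ≥ 1`, and let `k' = k[X]/(X^q - a)` (a purely inseparable field extension
of `k` of degree `q`).  Let `K` be an algebraic closure of `k`.  Then:
(i) the `k`-linear representation of `k'ˣ` on `k'` by multiplication is irreducible (the only
invariant `k`-subspaces are `⊥` and `⊤`); while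
(ii) the `K`-linear representation of `k'ˣ` on `K ⊗[k] k'`, where `u` acts by multiplication by
`1 ⊗ u`, is not semisimple (some invariant `K`-subspace has no invariant complement). -/
theorem stmt9 (k : Type*) [Field k] (p : ℕ) (hp : p.Prime) [CharP k p]
    (a : k) (ha : ∀ b : k, b ^ p ≠ a) (s : ℕ) (hs : 1 ≤ s)
    (K : Type*) [Field K] [Algebra k K] [IsAlgClosure k K] :
    (∀ N : Submodule k (AdjoinRoot (X ^ (p ^ s) - C a : Polynomial k)),
      (∀ u : (AdjoinRoot (X ^ (p ^ s) - C a : Polynomial k))ˣ,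
        ∀ v ∈ N, (u : AdjoinRoot (X ^ (p ^ s) - C a : Polynomial k)) * v ∈ N) →
      N = ⊥ ∨ N = ⊤) ∧
    ∃ N : Submodule K (K ⊗[k] AdjoinRoot (X ^ (p ^ s) - C a : Polynomial k)),
      (∀ u : (AdjoinRoot (X ^ (p ^ s) - C a : Polynomial k))ˣ,
        ∀ v ∈ N, (1 ⊗ₜ[k] (u : AdjoinRoot (X ^ (p ^ s) - C a : Polynomial k)) :
          K ⊗[k] AdjoinRoot (X ^ (p ^ s) - C a : Polynomial k)) * v ∈ N) ∧
      ¬ ∃ Q : Submodule K (K ⊗[k] AdjoinRoot (X ^ (p ^ s) - C a : Polynomial k)),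
        (∀ u : (AdjoinRoot (X ^ (p ^ s) - C a : Polynomial k))ˣ,
          ∀ v ∈ Q, (1 ⊗ₜ[k] (u : AdjoinRoot (X ^ (p ^ s) - C a : Polynomial k)) :
            K ⊗[k] AdjoinRoot (X ^ (p ^ s) - C a : Polynomial k)) * v ∈ Q) ∧
        IsCompl N Q := by
  have hirr := my_irred hp ha s
  haveI := Fact.mk hirr
  set f : k[X] := X ^ (p ^ s) - C a with hfdef
  have hq0 : p ^ s ≠ 0 := pow_ne_zero _ hp.ne_zero
  have hq1 : 1 < p ^ s := Nat.one_lt_pow (by omega) hp.one_lt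
  have hfm : f.Monic := monic_X_pow_sub_C a hq0
  have hf0 : f ≠ 0 := hfm.ne_zero
  constructor
  · -- part (i)
    intro N hN
    by_cases hbot : N = ⊥
    · exact Or.inl hbot
    right
    obtain ⟨v, hvN, hv0⟩ := Submodule.exists_mem_ne_zero_of_ne_bot hbot
    rw [eq_top_iff]
    intro w _
    by_cases hw : w = 0
    · rw [hw]; exact N.zero_mem
    have hwv : (w * v⁻¹) * v = w := by
      field_simp
    have := hN (Units.mk0 (w * v⁻¹) (by
      exact mul_ne_zero hw (inv_ne_zero hv0))) v hvN
    rwa [Units.val_mk0, hwv] at this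
  · -- part (ii)
    set k' := AdjoinRoot f
    set A := K ⊗[k] k'
    haveI : IsAlgClosed K := IsAlgClosure.isAlgClosed k
    obtain ⟨b, hb⟩ := IsAlgClosed.exists_pow_nat_eq (algebraMap k K a) (n := p ^ s)
      (Nat.pos_of_ne_zero hq0)
    -- basis of A
    set pb := AdjoinRoot.powerBasis hf0 with hpb
    set bA := pb.basis.baseChange K with hbA
    have hdim : pb.dim = p ^ s := by
      rw [hpb, AdjoinRoot.powerBasis_dim, hfdef, natDegree_X_pow_sub_C]
    have hA1 : (1 : A) = (1 : K) ⊗ₜ[k] (1 : k') := rfl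
    haveI : Nontrivial A := by
      refine nontrivial_of_ne (bA ⟨0, by omega⟩) 0 (bA.ne_zero _)
    haveI : CharP K p := charP_of_injective_algebraMap (algebraMap k K).injective p
    haveI : CharP A p := charP_of_injective_algebraMap (algebraMap K A).injective p
    haveI : ExpChar A p := .prime hp
    set x : k' := AdjoinRoot.root f with hx
    set t : A := (1 : K) ⊗ₜ[k] x - algebraMap K A b with ht
    have halg : ∀ c : K, algebraMap K A c = c ⊗ₜ[k] (1 : k') := fun c => rfl
    have htnil : t ^ p ^ s = 0 := by
      rw [ht, sub_pow_expChar_pow]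
      rw [Algebra.TensorProduct.tmul_pow, one_pow, ← map_pow, hb, hx,
        root_X_pow_sub_C_pow]
      rw [halg,
        show (AdjoinRoot.of f) a = a • (1 : k') from Algebra.algebraMap_eq_smul_one a,
        show (algebraMap k K) a = a • (1 : K) from Algebra.algebraMap_eq_smul_one a,
        TensorProduct.smul_tmul, sub_self]
    have ht0 : t ≠ 0 := by
      intro h
      have h1 : bA.repr t ⟨1, by omega⟩ = 1 := by
        rw [ht, halg, map_sub]
        have hb1 : pb.basis ⟨1, by omega⟩ = x := by
          rw [pb.basis_eq_pow ⟨1, by omega⟩, pow_one, hpb, AdjoinRoot.powerBasis_gen, hx]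
        have hb0 : pb.basis ⟨0, by omega⟩ = (1 : k') := by
          rw [pb.basis_eq_pow ⟨0, by omega⟩, pow_zero]
        rw [← hb1, ← hb0, hbA]
        rw [Finsupp.sub_apply, Module.Basis.baseChange_repr_tmul, Module.Basis.baseChange_repr_tmul,
          Module.Basis.repr_self, Module.Basis.repr_self]
        rw [Finsupp.single_apply, Finsupp.single_apply]
        simp [show (⟨0, by omega⟩ : Fin pb.dim) ≠ ⟨1, by omega⟩ from by
          simp [Fin.ext_iff]]
      rw [h] at h1
      simp at h1
    refine ⟨(nilradical A).restrictScalars K, ?_, ?_⟩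
    · intro u v hv
      exact Ideal.mul_mem_left _ _ hv
    rintro ⟨Q, hQ, hcompl⟩
    -- Q is closed under multiplication by any element of A
    have hQmul : ∀ z : A, ∀ v ∈ Q, z * v ∈ Q := by
      intro z
      induction z using TensorProduct.induction_on with
      | zero => intro v hv; rw [zero_mul]; exact Q.zero_mem
      | tmul c y =>
        intro v hv
        by_cases hy : y = 0
        · rw [hy, TensorProduct.tmul_zero, zero_mul]; exact Q.zero_mem
        · have h1 : ((1:K) ⊗ₜ[k] y) * v ∈ Q := hQ (Units.mk0 y hy) v hv
          have h2 : (c ⊗ₜ[k] y) * v = c • (((1:K) ⊗ₜ[k] y) * v) := by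
            rw [← smul_mul_assoc, TensorProduct.smul_tmul', smul_eq_mul, mul_one]
          rw [h2]
          exact Q.smul_mem c h1
      | add z₁ z₂ h1 h2 =>
        intro v hv
        rw [add_mul]
        exact Q.add_mem (h1 v hv) (h2 v hv)
    -- 1 = n + w with n nilpotent, w ∈ Q
    have hsup : ((nilradical A).restrictScalars K) ⊔ Q = ⊤ := codisjoint_iff.1 hcompl.2
    have h1mem : (1 : A) ∈ ((nilradical A).restrictScalars K) ⊔ Q := hsup ▸ Submodule.mem_top
    obtain ⟨n, hn, w, hw, hnw⟩ := Submodule.mem_sup.1 h1mem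
    have hnnil : IsNilpotent n := hn
    have hwu : IsUnit w := by
      have : w = 1 - n := by linear_combination hnw
      rw [this]
      exact hnnil.isUnit_one_sub
    obtain ⟨wu, rfl⟩ := hwu
    have htQ : t ∈ Q := by
      have := hQmul (t * (wu⁻¹ : Aˣ)) _ hw
      rwa [mul_assoc, Units.inv_mul, mul_one] at this
    have htN : t ∈ (nilradical A).restrictScalars K := ⟨p ^ s, htnil⟩
    have : t ∈ ((nilradical A).restrictScalars K) ⊓ Q := ⟨htN, htQ⟩
    rw [disjoint_iff.1 hcompl.1] at this
    exact ht0 (by simpa using this)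
end
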